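/- Let n, k be natural numbers with 1 ≤ k ≤ n − 2, and let G be a connected finite simple graph on n vertices that has a vertex cut of size at most k (i.e., there is a set S of at most k vertices such that the subgraph of G induced on the complement of S is disconnected). Then Π₁(G) ≤ k² · (n−1)^{2k} · (n−2)^{2(n−k−1)}, and equality holds if and only if G is isomorphic to K_n^k. -/

import Mathlib

/-- The first multiplicative Zagreb index `Π₁(G) = ∏_{u ∈ V(G)} d(u)²`. -/
noncomputable def multZagreb1 {V : Type*} [Fintype V] (G : SimpleGraph V) : ℕ :=
  letI := Classical.decRel G.Adj
  ∏ v : V, (G.degree v) ^ 2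

/-- The graph `K_n^k`: the complete graph `K_{n-1}` (on the vertices `some a`)
together with one extra vertex (`none`) joined to exactly `k` vertices of
`K_{n-1}`. -/
def Knk (n k : ℕ) : SimpleGraph (Option (Fin (n - 1))) :=
  SimpleGraph.fromRel (fun x y =>
    match x, y with
    | some _, some _ => True
    | none, some a => (a : ℕ) < k
    | some a, none => (a : ℕ) < k
    | none, none => False)


section Helpers

lemma pow_succ_le' (x e : ℕ) : (x+1)^(e+1) ≤ x^(e+1) + (e+1)*(x+1)^e := by
  induction e with
  | zero => simp
  | succ e ih =>
    have hxe : x^(e+1) ≤ (x+1)^(e+1) := Nat.pow_le_pow_left (by omega) _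
    calc (x+1)^(e+1+1) = (x+1)^(e+1) * x + (x+1)^(e+1) := by ring
      _ ≤ (x^(e+1) + (e+1)*(x+1)^e) * x + (x+1)^(e+1) := by
          exact Nat.add_le_add_right (Nat.mul_le_mul_right _ ih) _
      _ = x^(e+1+1) + (e+1)*((x+1)^e*x) + (x+1)^(e+1) := by ring
      _ ≤ x^(e+1+1) + (e+1)*((x+1)^(e+1)) + (x+1)^(e+1) := by
          have : (x+1)^e*x ≤ (x+1)^(e+1) := by
            calc (x+1)^e*x ≤ (x+1)^e*(x+1) := Nat.mul_le_mul_left _ (by omega)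
              _ = (x+1)^(e+1) := by ring
          have := Nat.mul_le_mul_left (e+1) this; omega
      _ = x^(e+1+1) + (e+1+1)*(x+1)^(e+1) := by ring

-- key log-convexity step: for z ≥ t ≥ 1: z^(2t) < (z+1)^(t+1) * (z-1)^(t-1)
lemma key_step (t z : ℕ) (ht : 1 ≤ t) (hz : t ≤ z) :
    z^(2*t) < (z+1)^(t+1) * (z-1)^(t-1) := by
  rcases Nat.lt_or_ge t 2 with h2 | h2
  · interval_cases t
    norm_num
    nlinarith
  · -- t ≥ 2, hence z ≥ 2
    have hz2 : 2 ≤ z := le_trans h2 hz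
    have hz2' : 1 ≤ z^2 := Nat.one_le_pow _ _ (by omega)
    have hsplit : (z+1)^(t+1) * (z-1)^(t-1) = (z+1)^2 * ((z^2-1)^(t-1)) := by
      obtain ⟨w, hw⟩ : ∃ w, z = w + 1 := ⟨z - 1, by omega⟩
      subst hw
      have e0 : (w+1) - 1 = w := by omega
      have e1 : (w+1)^2 - 1 = (w+1+1)*w := by
        have : (w+1)^2 = w*w + 2*w + 1 := by ring
        rw [this]; ring_nf; omega
      rw [e0, e1]
      have e2 : (w+1+1)^(t+1) = (w+1+1)^2 * (w+1+1)^(t-1) := by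
        rw [← pow_add]; congr 1; omega
      rw [e2, mul_pow]; ring
    rw [hsplit]
    have hb := pow_succ_le' (z^2 - 1) (t-2)
    have ht1 : t - 2 + 1 = t - 1 := by omega
    have hz21 : z^2 - 1 + 1 = z^2 := by omega
    rw [ht1, hz21] at hb
    -- hb : (z^2)^(t-1) ≤ (z^2-1)^(t-1) + (t-1) * (z^2)^(t-2)
    set P := (z^2)^(t-2) with hP
    have hPpos : 0 < P := Nat.pow_pos (by omega)
    have e1 : (z^2)^(t-1) = P * z^2 := by rw [hP, ← pow_succ]; congr 1; omega
    have e2 : z^(2*t) = P * (z^2 * z^2) := by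
      rw [hP, ← pow_mul, ← pow_add, ← pow_add]; congr 1; omega
    rw [e1] at hb
    -- hb : P * z^2 ≤ (z^2-1)^(t-1) + (t-1) * P
    have hb2 : (z+1)^2 * (P * z^2) ≤
        (z+1)^2 * ((z^2-1)^(t-1)) + (z+1)^2 * ((t-1) * P) := by
      calc (z+1)^2 * (P * z^2) ≤ (z+1)^2 * ((z^2-1)^(t-1) + (t-1)*P) :=
            Nat.mul_le_mul_left _ hb
        _ = (z+1)^2 * ((z^2-1)^(t-1)) + (z+1)^2 * ((t-1) * P) := by ring
    have hfin : z^(2*t) + (z+1)^2 * ((t-1)*P) < (z+1)^2 * (P * z^2) := by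
      rw [e2]
      have key : z^2*z^2 + (z+1)^2*(t-1) < (z+1)^2*z^2 := by
        have h1 : t - 1 ≤ z - 1 := by omega
        have h2 : (z+1)^2*(t-1) ≤ (z+1)^2*(z-1) := Nat.mul_le_mul_left _ h1
        have h3 : z^2*z^2 + (z+1)^2*(z-1) < (z+1)^2*z^2 := by
          zify [show (1:ℕ) ≤ z by omega]
          nlinarith [sq_nonneg z]
        omega
      calc P*(z^2*z^2) + (z+1)^2*((t-1)*P)
          = P * (z^2*z^2 + (z+1)^2*(t-1)) := by ring
        _ < P * ((z+1)^2*z^2) := by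
            exact Nat.mul_lt_mul_of_le_of_lt (le_refl P) key hPpos
        _ = (z+1)^2 * (P*z^2) := by ring
    linarith

lemma h_pos (m t : ℕ) : 1 ≤ (t+m)^t := by
  rcases Nat.eq_zero_or_pos t with h | h
  · subst h; simp
  · exact Nat.one_le_pow _ _ (by omega)

lemma ratio_mono (m s t : ℕ) (hst : s < t) :
    (s+1+m)^(s+1) * (t+m)^t < (t+1+m)^(t+1) * (s+m)^s := by
  induction t with
  | zero => omega
  | succ t ih =>
    have hA : ((t+1)+m)^(2*(t+1)) < ((t+1)+m+1)^(t+2) * ((t+1)+m-1)^t := by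
      have := key_step (t+1) (t+1+m) (by omega) (by omega)
      convert this using 3 <;> omega
    have hA' : ((t+1)+m)^(t+1) * ((t+1)+m)^(t+1) < ((t+2)+m)^(t+2) * (t+m)^t := by
      have e1 : ((t+1)+m)^(2*(t+1)) = ((t+1)+m)^(t+1) * ((t+1)+m)^(t+1) := by
        rw [← pow_add]; congr 1; omega
      have e2 : (t+1)+m+1 = (t+2)+m := by omega
      have e3 : (t+1)+m-1 = t+m := by omega
      rw [e1, e2, e3] at hA; exact hA
    rcases Nat.lt_or_ge s t with h | h
    · have ih' := ih h
      have h1 : (s+1+m)^(s+1) * ((t+1)+m)^(t+1) * ((t+m)^t) <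
          ((t+2)+m)^(t+2) * (s+m)^s * ((t+m)^t) := by
        calc (s+1+m)^(s+1) * ((t+1)+m)^(t+1) * ((t+m)^t)
            = ((s+1+m)^(s+1) * (t+m)^t) * ((t+1)+m)^(t+1) := by ring
          _ ≤ (((t+1)+m)^(t+1) * (s+m)^s) * ((t+1)+m)^(t+1) :=
              Nat.mul_le_mul_right _ (le_of_lt ih')
          _ = (((t+1)+m)^(t+1) * ((t+1)+m)^(t+1)) * (s+m)^s := by ring
          _ < (((t+2)+m)^(t+2) * (t+m)^t) * (s+m)^s :=
              Nat.mul_lt_mul_of_lt_of_le hA' (le_refl _) (h_pos m s)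
          _ = ((t+2)+m)^(t+2) * (s+m)^s * ((t+m)^t) := by ring
      have := h_pos m t
      exact lt_of_mul_lt_mul_right h1 (Nat.zero_le _)
    · have hs : s = t := by omega
      subst hs
      have e : s+1+1 = s+2 := by omega
      rw [e] at hA' ⊢
      exact hA'

lemma main_aux (m : ℕ) : ∀ a, 1 ≤ a → ∀ b, a ≤ b →
    ((a+m)^a * (b+m)^b ≤ (1+m) * (a+b-1+m)^(a+b-1)) ∧
    (2 ≤ a → (a+m)^a * (b+m)^b < (1+m) * (a+b-1+m)^(a+b-1)) := by
  intro a
  induction a with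
  | zero => omega
  | succ a ih =>
    intro _ b hab
    rcases Nat.eq_zero_or_pos a with ha0 | ha0
    · subst ha0
      constructor
      · have e : 1 + b - 1 = b := by omega
        rw [e]
        norm_num
      · omega
    · -- a ≥ 1, so a+1 ≥ 2
      have hstep := ratio_mono m a b (by omega)
      have hih := (ih ha0 (b+1) (by omega)).1
      have e1 : a + (b+1) - 1 = a + b := by omega
      rw [e1] at hih
      have e2 : a + 1 + b - 1 = a + b := by omega
      rw [e2]
      have hfin : (a+1+m)^(a+1) * (b+m)^b < (1+m) * (a+b+m)^(a+b) := by
        calc (a+1+m)^(a+1) * (b+m)^b < (b+1+m)^(b+1) * (a+m)^a := hstep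
          _ = (a+m)^a * (b+1+m)^(b+1) := by ring
          _ ≤ (1+m) * (a+b+m)^(a+b) := hih
      exact ⟨le_of_lt hfin, fun _ => hfin⟩

lemma main_ineq (m a b : ℕ) (ha : 1 ≤ a) (hb : 1 ≤ b) :
    (a+m)^a * (b+m)^b ≤ (1+m) * (a+b-1+m)^(a+b-1) := by
  rcases le_total a b with h | h
  · exact (main_aux m a ha b h).1
  · have := (main_aux m b hb a h).1
    rw [show b+a-1 = a+b-1 by omega] at this
    calc (a+m)^a * (b+m)^b = (b+m)^b * (a+m)^a := by ring
      _ ≤ _ := this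

lemma main_ineq_strict (m a b : ℕ) (ha : 2 ≤ a) (hb : 2 ≤ b) :
    (a+m)^a * (b+m)^b < (1+m) * (a+b-1+m)^(a+b-1) := by
  rcases le_total a b with h | h
  · exact (main_aux m a (by omega) b h).2 ha
  · have := (main_aux m b (by omega) a h).2 hb
    rw [show b+a-1 = a+b-1 by omega] at this
    calc (a+m)^a * (b+m)^b = (b+m)^b * (a+m)^a := by ring
      _ < _ := this



lemma knk_adj_some_some {n k : ℕ} (a b : Fin (n-1)) :
    (Knk n k).Adj (some a) (some b) ↔ a ≠ b := by
  simp [Knk, SimpleGraph.fromRel_adj]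

lemma knk_adj_none_some {n k : ℕ} (a : Fin (n-1)) :
    (Knk n k).Adj none (some a) ↔ (a : ℕ) < k := by
  simp [Knk, SimpleGraph.fromRel_adj]

lemma knk_adj_some_none {n k : ℕ} (a : Fin (n-1)) :
    (Knk n k).Adj (some a) none ↔ (a : ℕ) < k := by
  simp [Knk, SimpleGraph.fromRel_adj]

lemma knk_adj_none_none {n k : ℕ} : ¬ (Knk n k).Adj none none := by
  simp


lemma card_filter_fin_lt (N k : ℕ) (h : k ≤ N) :
    (Finset.univ.filter (fun a : Fin N => (a : ℕ) < k)).card = k := by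
  rw [Finset.card_filter]
  rw [Fin.sum_univ_eq_sum_range (fun i => if i < k then 1 else 0)]
  rw [← Finset.sum_filter]
  simp only [Finset.sum_const, smul_eq_mul, mul_one]
  have : (Finset.range N).filter (· < k) = Finset.range k := by
    ext i; simp; omega
  rw [this, Finset.card_range]

section
variable (n k : ℕ)
open SimpleGraph

lemma knk_degree_none (hk1 : 1 ≤ n - 1) (hkn : k ≤ n - 1) :
    letI := Classical.decRel (Knk n k).Adj
    (Knk n k).degree none = k := by
  letI := Classical.decRel (Knk n k).Adj
  classical
  rw [← SimpleGraph.card_neighborFinset_eq_degree]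
  have : (Knk n k).neighborFinset none =
      (Finset.univ.filter (fun b : Fin (n-1) => (b : ℕ) < k)).map
        ⟨some, Option.some_injective _⟩ := by
    ext x
    cases x with
    | none => simp [SimpleGraph.mem_neighborFinset]
    | some b => simp [SimpleGraph.mem_neighborFinset, knk_adj_none_some]
  rw [this, Finset.card_map, card_filter_fin_lt _ _ hkn]

lemma knk_degree_some_lt (a : Fin (n-1)) (ha : (a : ℕ) < k) :
    letI := Classical.decRel (Knk n k).Adj
    (Knk n k).degree (some a) = n - 1 := by
  letI := Classical.decRel (Knk n k).Adj
  classical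
  rw [← SimpleGraph.card_neighborFinset_eq_degree]
  have : (Knk n k).neighborFinset (some a) = Finset.univ.erase (some a) := by
    ext x
    cases x with
    | none => simp [SimpleGraph.mem_neighborFinset, knk_adj_some_none, ha]
    | some b =>
      simp [SimpleGraph.mem_neighborFinset, knk_adj_some_some, eq_comm, Ne]
  rw [this, Finset.card_erase_of_mem (Finset.mem_univ _)]
  simp

lemma knk_degree_some_ge (a : Fin (n-1)) (ha : ¬ (a : ℕ) < k) :
    letI := Classical.decRel (Knk n k).Adj
    (Knk n k).degree (some a) = n - 2 := by
  letI := Classical.decRel (Knk n k).Adj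
  classical
  rw [← SimpleGraph.card_neighborFinset_eq_degree]
  have : (Knk n k).neighborFinset (some a) =
      (Finset.univ.erase none).erase (some a) := by
    ext x
    cases x with
    | none => simp [SimpleGraph.mem_neighborFinset, knk_adj_some_none, ha]
    | some b =>
      simp [SimpleGraph.mem_neighborFinset, knk_adj_some_some, eq_comm, Ne]
  have hmem : (some a : Option (Fin (n-1))) ∈ Finset.univ.erase none :=
    Finset.mem_erase.2 ⟨by simp, Finset.mem_univ _⟩
  rw [this, Finset.card_erase_of_mem hmem, Finset.card_erase_of_mem (Finset.mem_univ _)]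
  simp only [Finset.card_univ, Fintype.card_option, Fintype.card_fin]
  omega

lemma multZagreb1_Knk (hk : 1 ≤ k) (hkn : k ≤ n - 2) :
    multZagreb1 (Knk n k) = k ^ 2 * (n - 1) ^ (2 * k) * (n - 2) ^ (2 * (n - k - 1)) := by
  have hn : 3 ≤ n := by omega
  letI := Classical.decRel (Knk n k).Adj
  have hZ : multZagreb1 (Knk n k) = ∏ v : Option (Fin (n-1)), ((Knk n k).degree v)^2 := rfl
  rw [hZ, Fintype.prod_option]
  rw [knk_degree_none n k (by omega) (by omega)]
  have hsplit := Finset.prod_filter_mul_prod_filter_not Finset.univ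
    (fun a : Fin (n-1) => (a : ℕ) < k) (fun a => ((Knk n k).degree (some a))^2)
  rw [← hsplit]
  have h1 : ∏ a ∈ Finset.univ.filter (fun a : Fin (n-1) => (a : ℕ) < k),
      ((Knk n k).degree (some a))^2 = ((n-1)^2)^k := by
    rw [Finset.prod_congr rfl (fun a ha => by
      rw [knk_degree_some_lt n k a (Finset.mem_filter.1 ha).2])]
    rw [Finset.prod_const, card_filter_fin_lt _ _ (by omega)]
  have h2 : ∏ a ∈ Finset.univ.filter (fun a : Fin (n-1) => ¬ (a : ℕ) < k),
      ((Knk n k).degree (some a))^2 = ((n-2)^2)^(n-k-1) := by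
    rw [Finset.prod_congr rfl (fun a ha => by
      rw [knk_degree_some_ge n k a (Finset.mem_filter.1 ha).2])]
    rw [Finset.prod_const]
    congr 1
    have := card_filter_fin_lt (n-1) k (by omega)
    have hcompl : (Finset.univ.filter (fun a : Fin (n-1) => ¬ (a : ℕ) < k)).card
        = (n-1) - k := by
      have htot := Finset.card_filter_add_card_filter_not
        (s := (Finset.univ : Finset (Fin (n-1)))) (p := fun a => (a : ℕ) < k)
      rw [Finset.card_univ, Fintype.card_fin] at htot
      omega
    rw [hcompl]; omega
  rw [h1, h2, ← pow_mul, ← pow_mul]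
  ring
end

lemma iso_of_structure {V : Type*} [Fintype V] (G : SimpleGraph V) (n k : ℕ)
    (hk : 1 ≤ k) (hkn : k ≤ n - 2) (hV : Fintype.card V = n)
    (u₀ : V) (Y C : Finset V)
    (hu₀Y : u₀ ∉ Y) (hu₀C : u₀ ∉ C) (hYC : Disjoint Y C)
    (hYcard : Y.card = n - k - 1) (hCcard : C.card = k)
    (hadj : ∀ x y : V, G.Adj x y ↔ (x ≠ y ∧ ¬(x = u₀ ∧ y ∈ Y) ∧ ¬(y = u₀ ∧ x ∈ Y))) :
    Nonempty (G ≃g Knk n k) := by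
  classical
  have hn3 : 3 ≤ n := by omega
  let eC : Fin k ≃ {x // x ∈ C} := (Finset.equivFinOfCardEq hCcard).symm
  let eY : Fin (n-k-1) ≃ {x // x ∈ Y} := (Finset.equivFinOfCardEq hYcard).symm
  let f : Option (Fin (n-1)) → V := fun x => x.elim u₀ (fun i =>
    if h : (i : ℕ) < k then (eC ⟨(i : ℕ), h⟩ : V)
    else (eY ⟨(i : ℕ) - k, by have := i.isLt; omega⟩ : V))
  have hfC : ∀ (i : Fin (n-1)) (h : (i:ℕ) < k), f (some i) = (eC ⟨(i:ℕ), h⟩ : V) := by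
    intro i h; simp only [f, Option.elim, dif_pos h]
  have hfY : ∀ (i : Fin (n-1)) (h : ¬ (i:ℕ) < k),
      f (some i) = (eY ⟨(i:ℕ) - k, by have := i.isLt; omega⟩ : V) := by
    intro i h; simp only [f, Option.elim, dif_neg h]
  have hfmemC : ∀ (i : Fin (n-1)), (i:ℕ) < k → f (some i) ∈ C := by
    intro i h; rw [hfC i h]; exact (eC ⟨(i:ℕ), h⟩).2
  have hfmemY : ∀ (i : Fin (n-1)), ¬ (i:ℕ) < k → f (some i) ∈ Y := by
    intro i h; rw [hfY i h]; exact (eY _).2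
  have hfne : ∀ (i : Fin (n-1)), f (some i) ≠ u₀ := by
    intro i
    by_cases h : (i:ℕ) < k
    · intro he; exact hu₀C (he ▸ hfmemC i h)
    · intro he; exact hu₀Y (he ▸ hfmemY i h)
  have hfinj : Function.Injective f := by
    intro x y hxy
    cases x with
    | none =>
      cases y with
      | none => rfl
      | some j => exact absurd hxy.symm (hfne j)
    | some i =>
      cases y with
      | none => exact absurd hxy (hfne i)
      | some j =>
        by_cases hi : (i:ℕ) < k <;> by_cases hj : (j:ℕ) < k
        · rw [hfC i hi, hfC j hj] at hxy
          have h2 := eC.injective (Subtype.val_injective hxy)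
          have h3 : (i:ℕ) = (j:ℕ) := by simpa using congrArg Fin.val h2
          exact congrArg some (Fin.ext h3)
        · exfalso
          have h1 : f (some j) ∈ C := hxy ▸ hfmemC i hi
          exact Finset.disjoint_left.1 hYC (hfmemY j hj) h1
        · exfalso
          have h1 : f (some j) ∈ Y := hxy ▸ hfmemY i hi
          exact Finset.disjoint_left.1 hYC h1 (hfmemC j hj)
        · rw [hfY i hi, hfY j hj] at hxy
          have h2 := eY.injective (Subtype.val_injective hxy)
          have h3 : (i:ℕ) - k = (j:ℕ) - k := congrArg Fin.val h2
          have : (i:ℕ) = (j:ℕ) := by omega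
          exact congrArg some (Fin.ext this)
  have hbij : Function.Bijective f := by
    rw [Fintype.bijective_iff_injective_and_card]
    refine ⟨hfinj, ?_⟩
    simp [hV]; omega
  let e : Option (Fin (n-1)) ≃ V := Equiv.ofBijective f hbij
  have he : ∀ x, e x = f x := fun x => rfl
  refine ⟨(RelIso.symm ⟨e, ?_⟩ : G ≃g Knk n k)⟩
  intro x y
  rw [he, he]
  cases x with
  | none =>
    cases y with
    | none => simp [SimpleGraph.irrefl]
    | some j =>
      rw [knk_adj_none_some]
      rw [hadj]
      constructor
      · rintro ⟨-, h2, -⟩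
        by_contra hj
        exact h2 ⟨rfl, hfmemY j hj⟩
      · intro hj
        refine ⟨?_, ?_, ?_⟩
        · exact fun h => (hfne j) h.symm
        · rintro ⟨-, hY⟩
          exact Finset.disjoint_left.1 hYC hY (hfmemC j hj)
        · rintro ⟨h, -⟩
          exact (hfne j h)
  | some i =>
    cases y with
    | none =>
      rw [knk_adj_some_none]
      rw [hadj]
      constructor
      · rintro ⟨-, -, h3⟩
        by_contra hi
        exact h3 ⟨rfl, hfmemY i hi⟩
      · intro hi
        refine ⟨hfne i, ?_, ?_⟩
        · rintro ⟨h, -⟩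
          exact (hfne i h)
        · rintro ⟨-, hY⟩
          exact Finset.disjoint_left.1 hYC hY (hfmemC i hi)
    | some j =>
      rw [knk_adj_some_some]
      rw [hadj]
      constructor
      · rintro ⟨h1, -, -⟩
        intro hij
        exact h1 (by rw [hij])
      · intro hij
        refine ⟨?_, ?_, ?_⟩
        · intro h
          exact hij (Option.some_injective _ (hfinj h))
        · rintro ⟨h, -⟩
          exact (hfne i h)
        · rintro ⟨h, -⟩
          exact (hfne j h)

lemma adj_characterization {V : Type*} [Fintype V] [DecidableEq V] (G : SimpleGraph V)
    [DecidableRel G.Adj]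
    (n k : ℕ) (hk : 1 ≤ k) (hkn : k ≤ n - 2) (hV : Fintype.card V = n)
    (u₀ : V) (Y C : Finset V)
    (hu₀Y : u₀ ∉ Y) (hu₀C : u₀ ∉ C) (hYC : Disjoint Y C)
    (hYcard : Y.card = n - k - 1) (hCcard : C.card = k)
    (hnoedge : ∀ v ∈ Y, ¬ G.Adj u₀ v)
    (hdegu : G.degree u₀ = k)
    (hdegY : ∀ v ∈ Y, G.degree v = n - 2)
    (hdegC : ∀ v ∈ C, G.degree v = n - 1) :
    ∀ x y : V, G.Adj x y ↔ (x ≠ y ∧ ¬(x = u₀ ∧ y ∈ Y) ∧ ¬(y = u₀ ∧ x ∈ Y)) := by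
  have hn3 : 3 ≤ n := by omega
  -- cover
  have hcover : ∀ v : V, v = u₀ ∨ v ∈ Y ∨ v ∈ C := by
    have hD : (insert u₀ (Y ∪ C)).card = n := by
      rw [Finset.card_insert_of_notMem (by simp [hu₀Y, hu₀C]),
        Finset.card_union_of_disjoint hYC, hYcard, hCcard]
      omega
    have : insert u₀ (Y ∪ C) = Finset.univ := Finset.eq_univ_of_card _ (by rw [hD, hV])
    intro v
    have hv : v ∈ insert u₀ (Y ∪ C) := this ▸ Finset.mem_univ v
    simp only [Finset.mem_insert, Finset.mem_union] at hv
    tauto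
  -- C vertices adjacent to everything else
  have hCadj : ∀ v ∈ C, ∀ w : V, w ≠ v → G.Adj v w := by
    intro v hv w hw
    have hsub : G.neighborFinset v ⊆ Finset.univ.erase v := by
      intro w hw
      rw [SimpleGraph.mem_neighborFinset] at hw
      exact Finset.mem_erase.2 ⟨hw.ne', Finset.mem_univ _⟩
    have hcard : (Finset.univ.erase v).card ≤ (G.neighborFinset v).card := by
      rw [Finset.card_erase_of_mem (Finset.mem_univ _), Finset.card_univ, hV,
        SimpleGraph.card_neighborFinset_eq_degree, hdegC v hv]
    have heq := Finset.eq_of_subset_of_card_le hsub hcard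
    have : w ∈ G.neighborFinset v := by
      rw [heq]; exact Finset.mem_erase.2 ⟨hw, Finset.mem_univ _⟩
    rwa [SimpleGraph.mem_neighborFinset] at this
  -- Y vertices adjacent to everything except u₀ and itself
  have hYadj : ∀ v ∈ Y, ∀ w : V, w ≠ v → w ≠ u₀ → G.Adj v w := by
    intro v hv w hwv hwu
    have hvu : v ≠ u₀ := fun h => hu₀Y (h ▸ hv)
    have hsub : G.neighborFinset v ⊆ (Finset.univ.erase v).erase u₀ := by
      intro w hw
      rw [SimpleGraph.mem_neighborFinset] at hw
      refine Finset.mem_erase.2 ⟨?_, Finset.mem_erase.2 ⟨hw.ne', Finset.mem_univ _⟩⟩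
      intro h
      exact hnoedge v hv (h ▸ hw.symm)
    have hcard : ((Finset.univ.erase v).erase u₀).card ≤ (G.neighborFinset v).card := by
      rw [Finset.card_erase_of_mem (Finset.mem_erase.2 ⟨Ne.symm hvu, Finset.mem_univ _⟩)]
      rw [Finset.card_erase_of_mem (Finset.mem_univ _), Finset.card_univ, hV,
        SimpleGraph.card_neighborFinset_eq_degree, hdegY v hv]
      omega
    have heq := Finset.eq_of_subset_of_card_le hsub hcard
    have : w ∈ G.neighborFinset v := by
      rw [heq]
      exact Finset.mem_erase.2 ⟨hwu, Finset.mem_erase.2 ⟨hwv, Finset.mem_univ _⟩⟩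
    rwa [SimpleGraph.mem_neighborFinset] at this
  -- u₀ adjacent exactly to C
  have huadj : ∀ w : V, G.Adj u₀ w ↔ w ∈ C := by
    have hsub : G.neighborFinset u₀ ⊆ C := by
      intro w hw
      rw [SimpleGraph.mem_neighborFinset] at hw
      rcases hcover w with h | h | h
      · exact absurd h hw.ne'
      · exact absurd hw (hnoedge w h)
      · exact h
    have hcard : C.card ≤ (G.neighborFinset u₀).card := by
      rw [hCcard, SimpleGraph.card_neighborFinset_eq_degree, hdegu]
    have heq := Finset.eq_of_subset_of_card_le hsub hcard
    intro w
    rw [← SimpleGraph.mem_neighborFinset, heq]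
  -- conclude
  intro x y
  constructor
  · intro h
    refine ⟨h.ne, ?_, ?_⟩
    · rintro ⟨rfl, hy⟩
      exact hnoedge y hy h
    · rintro ⟨rfl, hx⟩
      exact hnoedge x hx h.symm
  · rintro ⟨hne, h2, h3⟩
    rcases hcover x with rfl | hx | hx
    · rcases hcover y with rfl | hy | hy
      · exact absurd rfl hne
      · exact absurd ⟨rfl, hy⟩ h2
      · exact ((huadj y).2 hy)
    · have hyu : y ≠ u₀ := fun h => h3 ⟨h, hx⟩
      exact hYadj x hx y (Ne.symm hne) hyu
    · exact hCadj x hx y (Ne.symm hne)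

lemma prod_forcing {ι : Type*} (s : Finset ι) (f g : ι → ℕ)
    (hle : ∀ i ∈ s, f i ≤ g i) (hpos : ∀ i ∈ s, 0 < f i)
    (he : ∏ i ∈ s, f i = ∏ i ∈ s, g i) : ∀ i ∈ s, f i = g i := by
  intro i hi
  by_contra hne
  have hlt : f i < g i := lt_of_le_of_ne (hle i hi) hne
  exact absurd he (ne_of_lt (Finset.prod_lt_prod hpos hle ⟨i, hi, hlt⟩))

lemma mul3_forcing {x1 x2 x3 y1 y2 y3 : ℕ} (h1 : x1 ≤ y1) (h2 : x2 ≤ y2) (h3 : x3 ≤ y3)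
    (p1 : 0 < x1) (p2 : 0 < x2) (p3 : 0 < x3) (he : x1*x2*x3 = y1*y2*y3) :
    x1 = y1 ∧ x2 = y2 ∧ x3 = y3 := by
  have q1 : 0 < y1 := lt_of_lt_of_le p1 h1
  have q2 : 0 < y2 := lt_of_lt_of_le p2 h2
  have q3 : 0 < y3 := lt_of_lt_of_le p3 h3
  refine ⟨?_, ?_, ?_⟩ <;> by_contra hne
  · have : x1*x2*x3 < y1*y2*y3 := by
      calc x1*x2*x3 < y1*x2*x3 :=
            Nat.mul_lt_mul_of_lt_of_le (Nat.mul_lt_mul_of_lt_of_le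
              (lt_of_le_of_ne h1 hne) (le_refl _) p2) (le_refl _) p3
        _ ≤ y1*y2*y3 := Nat.mul_le_mul (Nat.mul_le_mul (le_refl _) h2) h3
    omega
  · have : x1*x2*x3 < y1*y2*y3 := by
      calc x1*x2*x3 < y1*y2*x3 :=
            Nat.mul_lt_mul_of_lt_of_le (Nat.mul_lt_mul_of_le_of_lt h1
              (lt_of_le_of_ne h2 hne) q1) (le_refl _) p3
        _ ≤ y1*y2*y3 := Nat.mul_le_mul (le_refl _) h3
    omega
  · have : x1*x2*x3 < y1*y2*y3 := by
      calc x1*x2*x3 ≤ y1*y2*x3 := Nat.mul_le_mul (Nat.mul_le_mul h1 h2) (le_refl _)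
        _ < y1*y2*y3 := Nat.mul_lt_mul_of_le_of_lt (le_refl _)
              (lt_of_le_of_ne h3 hne) (Nat.mul_pos q1 q2)
    omega

lemma resize {V : Type*} [DecidableEq V] (A B : Finset V)
    (hA : A.Nonempty) (hB : B.Nonempty) (c : ℕ) (hc2 : 2 ≤ c)
    (hc : c ≤ A.card + B.card) :
    ∃ A' B' : Finset V, A' ⊆ A ∧ B' ⊆ B ∧ A'.Nonempty ∧ B'.Nonempty ∧
      A'.card + B'.card = c := by
  have hA1 : 1 ≤ A.card := Finset.card_pos.2 hA
  have hB1 : 1 ≤ B.card := Finset.card_pos.2 hB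
  set a' := min A.card (c-1) with ha'
  set b' := c - a' with hb'
  have ha'A : a' ≤ A.card := min_le_left _ _
  have hb'B : b' ≤ B.card := by omega
  obtain ⟨A', hA'sub, hA'card⟩ := Finset.exists_subset_card_eq ha'A
  obtain ⟨B', hB'sub, hB'card⟩ := Finset.exists_subset_card_eq hb'B
  refine ⟨A', B', hA'sub, hB'sub, ?_, ?_, by omega⟩
  · rw [← Finset.card_pos, hA'card]; omega
  · rw [← Finset.card_pos, hB'card]; omega

lemma exists_partition {V : Type*} [Fintype V] [DecidableEq V] (G : SimpleGraph V)
    (S : Finset V) (hdis : ¬ (G.induce ((S : Set V)ᶜ)).Connected)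
    (hlt : S.card < Fintype.card V) :
    ∃ A B : Finset V, A.Nonempty ∧ B.Nonempty ∧ Disjoint A B ∧ A ∪ B = Sᶜ ∧
      ∀ u ∈ A, ∀ v ∈ B, ¬ G.Adj u v := by
  classical
  set U : Set V := ((S : Set V))ᶜ with hU
  have hScompl : 0 < Sᶜ.card := by
    rw [Finset.card_compl]
    omega
  obtain ⟨x, hx⟩ := Finset.card_pos.1 hScompl
  have hxU : x ∈ U := by
    rw [hU, Set.mem_compl_iff]
    simpa using (Finset.mem_compl.1 hx)
  haveI : Nonempty ↥U := ⟨⟨x, hxU⟩⟩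
  rw [SimpleGraph.connected_iff] at hdis
  have hpre : ¬ (G.induce U).Preconnected := by tauto
  rw [SimpleGraph.Preconnected] at hpre
  push_neg at hpre
  obtain ⟨p, q, hpq⟩ := hpre
  set A : Finset V := Finset.univ.filter
    (fun v => ∃ hv : v ∈ U, (G.induce U).Reachable p ⟨v, hv⟩) with hA
  refine ⟨A, Sᶜ \ A, ⟨p.1, ?_⟩, ⟨q.1, ?_⟩, Finset.disjoint_sdiff, ?_, ?_⟩
  · rw [hA, Finset.mem_filter]
    exact ⟨Finset.mem_univ _, p.2, by exact SimpleGraph.Reachable.refl _⟩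
  · rw [Finset.mem_sdiff]
    constructor
    · rw [Finset.mem_compl]
      exact fun hqS => q.2 (Finset.mem_coe.2 hqS)
    · rw [hA, Finset.mem_filter]
      rintro ⟨-, hv, hreach⟩
      exact hpq (hreach.trans (by rfl))
  · -- A ∪ (Sᶜ \ A) = Sᶜ
    have hAsub : A ⊆ Sᶜ := by
      intro v hv
      rw [hA, Finset.mem_filter] at hv
      obtain ⟨-, hvU, -⟩ := hv
      rw [hU, Set.mem_compl_iff] at hvU
      rw [Finset.mem_compl]
      simpa using hvU
    exact Finset.union_sdiff_of_subset hAsub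
  · intro u hu v hv hadj
    rw [hA, Finset.mem_filter] at hu
    obtain ⟨-, huU, hreach⟩ := hu
    rw [Finset.mem_sdiff] at hv
    obtain ⟨hvS, hvA⟩ := hv
    have hvU : v ∈ U := by
      rw [hU, Set.mem_compl_iff]
      simpa using (Finset.mem_compl.1 hvS)
    apply hvA
    rw [hA, Finset.mem_filter]
    refine ⟨Finset.mem_univ _, hvU, ?_⟩
    have hadj' : (G.induce U).Adj ⟨u, huU⟩ ⟨v, hvU⟩ := by
      simp [SimpleGraph.comap_adj, hadj]
    exact hreach.trans hadj'.reachable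



lemma multZagreb1_eq_of_iso {V W : Type*} [Fintype V] [Fintype W]
    {G : SimpleGraph V} {H : SimpleGraph W} (e : G ≃g H) :
    multZagreb1 G = multZagreb1 H := by
  letI := Classical.decRel G.Adj
  letI := Classical.decRel H.Adj
  have hdeg : ∀ v : V, G.degree v = H.degree (e v) := by
    intro v
    rw [← SimpleGraph.card_neighborSet_eq_degree, ← SimpleGraph.card_neighborSet_eq_degree]
    exact Fintype.card_congr (e.mapNeighborSet v)
  show (∏ v : V, (G.degree v)^2) = ∏ w : W, (H.degree w)^2
  rw [← Equiv.prod_comp e.toEquiv (fun w => (H.degree w)^2)]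
  exact Finset.prod_congr rfl (fun v _ => by rw [hdeg v]; rfl)

end Helpers

/-- **Theorem 1 for `Π₁` (Wang).** If `1 ≤ k ≤ n - 2` and `G` is a connected
graph on `n` vertices having a vertex cut of size at most `k`, then
`Π₁(G) ≤ k² (n-1)^{2k} (n-2)^{2(n-k-1)}`, with equality iff `G ≅ K_n^k`. -/
theorem multZagreb1_le_of_vertexCut {V : Type*} [Fintype V] (n k : ℕ)
    (hk : 1 ≤ k) (hkn : k ≤ n - 2)
    (G : SimpleGraph V) (hV : Fintype.card V = n) (hG : G.Connected)
    (hcut : ∃ S : Finset V, S.card ≤ k ∧ ¬ (G.induce ((S : Set V)ᶜ)).Connected) :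
    multZagreb1 G ≤ k ^ 2 * (n - 1) ^ (2 * k) * (n - 2) ^ (2 * (n - k - 1)) ∧
      (multZagreb1 G = k ^ 2 * (n - 1) ^ (2 * k) * (n - 2) ^ (2 * (n - k - 1)) ↔
        Nonempty (G ≃g Knk n k)) := by
  letI := Classical.decRel G.Adj
  classical
  have hn3 : 3 ≤ n := by omega
  have hZ : multZagreb1 G = ∏ v : V, (G.degree v)^2 := rfl
  obtain ⟨S, hScard, hSdis⟩ := hcut
  have hSlt : S.card < Fintype.card V := by rw [hV]; omega
  obtain ⟨A, B, hAne, hBne, hABdisj, hABunion, hnoedge⟩ := exists_partition G S hSdis hSlt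
  have hABcard : A.card + B.card = n - S.card := by
    rw [← Finset.card_union_of_disjoint hABdisj, hABunion, Finset.card_compl, hV]
  obtain ⟨A', B', hA'sub, hB'sub, hA'ne, hB'ne, hcard'⟩ :=
    resize A B hAne hBne (n-k) (by omega) (by omega)
  have hAB'disj : Disjoint A' B' := hABdisj.mono hA'sub hB'sub
  have hnoedge' : ∀ u ∈ A', ∀ v ∈ B', ¬ G.Adj u v :=
    fun u hu v hv => hnoedge u (hA'sub hu) v (hB'sub hv)
  set a := A'.card with ha
  set b := B'.card with hb
  have ha1 : 1 ≤ a := Finset.card_pos.2 hA'ne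
  have hb1 : 1 ≤ b := Finset.card_pos.2 hB'ne
  set C := (A' ∪ B')ᶜ with hCdef
  have hdisjC : Disjoint (A' ∪ B') C := disjoint_compl_right
  have hCcard : C.card = k := by
    rw [hCdef, Finset.card_compl, Finset.card_union_of_disjoint hAB'disj, hV]
    omega
  have huniv : (A' ∪ B') ∪ C = Finset.univ := Finset.union_compl _
  -- degree positivity
  have hdegpos : ∀ v : V, 0 < G.degree v := by
    intro v
    rw [SimpleGraph.degree_pos_iff_exists_adj]
    obtain ⟨w, hw⟩ := Fintype.exists_ne_of_one_lt_card (by omega) v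
    obtain ⟨pw⟩ := hG.preconnected v w
    cases pw with
    | nil => exact absurd rfl hw
    | cons h p => exact ⟨_, h⟩
  -- degree bounds
  have hdegA : ∀ v ∈ A', G.degree v ≤ a + k - 1 := by
    intro v hv
    have hsub : G.neighborFinset v ⊆ (A' ∪ C).erase v := by
      intro w hw
      rw [SimpleGraph.mem_neighborFinset] at hw
      refine Finset.mem_erase.2 ⟨hw.ne', ?_⟩
      by_contra hwAC
      rw [Finset.mem_union] at hwAC
      push_neg at hwAC
      have hwB : w ∈ B' := by
        have : w ∉ C := hwAC.2
        rw [hCdef, Finset.mem_compl, not_not, Finset.mem_union] at this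
        tauto
      exact hnoedge' v hv w hwB hw
    have hdisjAC : Disjoint A' C :=
      (Finset.disjoint_of_subset_left Finset.subset_union_left hdisjC)
    have hAC : (A' ∪ C).card = a + k := by
      rw [Finset.card_union_of_disjoint hdisjAC, hCcard]
    have hmem : v ∈ A' ∪ C := Finset.mem_union_left _ hv
    calc G.degree v ≤ ((A' ∪ C).erase v).card := by
          rw [← SimpleGraph.card_neighborFinset_eq_degree]
          exact Finset.card_le_card hsub
      _ = a + k - 1 := by rw [Finset.card_erase_of_mem hmem, hAC]
  have hdegB : ∀ v ∈ B', G.degree v ≤ b + k - 1 := by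
    intro v hv
    have hsub : G.neighborFinset v ⊆ (B' ∪ C).erase v := by
      intro w hw
      rw [SimpleGraph.mem_neighborFinset] at hw
      refine Finset.mem_erase.2 ⟨hw.ne', ?_⟩
      by_contra hwAC
      rw [Finset.mem_union] at hwAC
      push_neg at hwAC
      have hwA : w ∈ A' := by
        have : w ∉ C := hwAC.2
        rw [hCdef, Finset.mem_compl, not_not, Finset.mem_union] at this
        tauto
      exact hnoedge' w hwA v hv hw.symm
    have hdisjBC : Disjoint B' C :=
      (Finset.disjoint_of_subset_left Finset.subset_union_right hdisjC)
    have hBC : (B' ∪ C).card = b + k := by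
      rw [Finset.card_union_of_disjoint hdisjBC, hCcard]
    have hmem : v ∈ B' ∪ C := Finset.mem_union_left _ hv
    calc G.degree v ≤ ((B' ∪ C).erase v).card := by
          rw [← SimpleGraph.card_neighborFinset_eq_degree]
          exact Finset.card_le_card hsub
      _ = b + k - 1 := by rw [Finset.card_erase_of_mem hmem, hBC]
  have hdegn1 : ∀ v : V, G.degree v ≤ n - 1 := by
    intro v
    have := G.degree_lt_card_verts v
    rw [hV] at this
    omega
  -- product decomposition
  have hsplit : multZagreb1 G =
      (∏ v ∈ A', (G.degree v)^2) * (∏ v ∈ B', (G.degree v)^2) *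
        (∏ v ∈ C, (G.degree v)^2) := by
    rw [hZ, ← huniv, Finset.prod_union hdisjC, Finset.prod_union hAB'disj]
  have hPA : (∏ v ∈ A', (G.degree v)^2) ≤ ((a+k-1)^2)^a := by
    calc (∏ v ∈ A', (G.degree v)^2) ≤ ∏ _v ∈ A', (a+k-1)^2 :=
          Finset.prod_le_prod' (fun v hv => Nat.pow_le_pow_left (hdegA v hv) 2)
      _ = ((a+k-1)^2)^a := by rw [Finset.prod_const]
  have hPB : (∏ v ∈ B', (G.degree v)^2) ≤ ((b+k-1)^2)^b := by
    calc (∏ v ∈ B', (G.degree v)^2) ≤ ∏ _v ∈ B', (b+k-1)^2 :=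
          Finset.prod_le_prod' (fun v hv => Nat.pow_le_pow_left (hdegB v hv) 2)
      _ = ((b+k-1)^2)^b := by rw [Finset.prod_const]
  have hPC : (∏ v ∈ C, (G.degree v)^2) ≤ ((n-1)^2)^k := by
    calc (∏ v ∈ C, (G.degree v)^2) ≤ ∏ _v ∈ C, (n-1)^2 :=
          Finset.prod_le_prod' (fun v _hv => Nat.pow_le_pow_left (hdegn1 v) 2)
      _ = ((n-1)^2)^k := by rw [Finset.prod_const, hCcard]
  have hPApos : 0 < ∏ v ∈ A', (G.degree v)^2 :=
    Finset.prod_pos (fun v _ => pow_pos (hdegpos v) 2)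
  have hPBpos : 0 < ∏ v ∈ B', (G.degree v)^2 :=
    Finset.prod_pos (fun v _ => pow_pos (hdegpos v) 2)
  have hPCpos : 0 < ∏ v ∈ C, (G.degree v)^2 :=
    Finset.prod_pos (fun v _ => pow_pos (hdegpos v) 2)
  -- arithmetic facts
  have hsum : a + b = n - k := hcard'
  have e1 : a + (k-1) = a+k-1 := by omega
  have e2 : b + (k-1) = b+k-1 := by omega
  have e3 : 1 + (k-1) = k := by omega
  have e5 : a+b-1 = n-k-1 := by omega
  have e4 : a+b-1+(k-1) = n-2 := by omega
  have harith : (a+k-1)^a * (b+k-1)^b ≤ k * (n-2)^(n-k-1) := by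
    have := main_ineq (k-1) a b ha1 hb1
    rw [e1, e2, e3, e4, e5] at this
    exact this
  have hsq1 : ((a+k-1)^2)^a * ((b+k-1)^2)^b = ((a+k-1)^a * (b+k-1)^b)^2 := by
    rw [mul_pow, ← pow_mul, ← pow_mul, ← pow_mul, ← pow_mul]
    ring_nf
  have hsq2 : (k * (n-2)^(n-k-1))^2 * ((n-1)^2)^k =
      k^2 * (n-1)^(2*k) * (n-2)^(2*(n-k-1)) := by
    rw [mul_pow, ← pow_mul, ← pow_mul]
    ring_nf
  have hM : ((a+k-1)^2)^a * ((b+k-1)^2)^b * ((n-1)^2)^k ≤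
      k^2 * (n-1)^(2*k) * (n-2)^(2*(n-k-1)) := by
    calc ((a+k-1)^2)^a * ((b+k-1)^2)^b * ((n-1)^2)^k
        = ((a+k-1)^a * (b+k-1)^b)^2 * ((n-1)^2)^k := by rw [hsq1]
      _ ≤ (k * (n-2)^(n-k-1))^2 * ((n-1)^2)^k :=
          Nat.mul_le_mul_right _ (Nat.pow_le_pow_left harith 2)
      _ = k^2 * (n-1)^(2*k) * (n-2)^(2*(n-k-1)) := hsq2
  have hmid : multZagreb1 G ≤ ((a+k-1)^2)^a * ((b+k-1)^2)^b * ((n-1)^2)^k := by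
    rw [hsplit]
    exact Nat.mul_le_mul (Nat.mul_le_mul hPA hPB) hPC
  have hle : multZagreb1 G ≤ k^2 * (n-1)^(2*k) * (n-2)^(2*(n-k-1)) :=
    le_trans hmid hM
  refine ⟨hle, ?_, ?_⟩
  · -- equality implies iso
    intro hEq
    have hmid_eq : ((a+k-1)^2)^a * ((b+k-1)^2)^b * ((n-1)^2)^k =
        k^2 * (n-1)^(2*k) * (n-2)^(2*(n-k-1)) :=
      le_antisymm hM (hEq ▸ hmid)
    have hPeq : (∏ v ∈ A', (G.degree v)^2) * (∏ v ∈ B', (G.degree v)^2) *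
        (∏ v ∈ C, (G.degree v)^2) =
        ((a+k-1)^2)^a * ((b+k-1)^2)^b * ((n-1)^2)^k := by
      rw [← hsplit, hEq, hmid_eq]
    obtain ⟨hea, heb, hec⟩ := mul3_forcing hPA hPB hPC hPApos hPBpos hPCpos hPeq
    have hdA : ∀ v ∈ A', G.degree v = a+k-1 := by
      intro v hv
      have h2 := prod_forcing A' _ (fun _ => (a+k-1)^2)
        (fun v hv => Nat.pow_le_pow_left (hdegA v hv) 2)
        (fun v _ => pow_pos (hdegpos v) 2)
        (by rw [Finset.prod_const]; exact hea) v hv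
      exact Nat.pow_left_injective (by norm_num) h2
    have hdB : ∀ v ∈ B', G.degree v = b+k-1 := by
      intro v hv
      have h2 := prod_forcing B' _ (fun _ => (b+k-1)^2)
        (fun v hv => Nat.pow_le_pow_left (hdegB v hv) 2)
        (fun v _ => pow_pos (hdegpos v) 2)
        (by rw [Finset.prod_const]; exact heb) v hv
      exact Nat.pow_left_injective (by norm_num) h2
    have hdC : ∀ v ∈ C, G.degree v = n-1 := by
      intro v hv
      have h2 := prod_forcing C _ (fun _ => (n-1)^2)
        (fun v _ => Nat.pow_le_pow_left (hdegn1 v) 2)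
        (fun v _ => pow_pos (hdegpos v) 2)
        (by rw [Finset.prod_const, hCcard]; exact hec) v hv
      exact Nat.pow_left_injective (by norm_num) h2
    have hor : a = 1 ∨ b = 1 := by
      by_contra hcon
      push_neg at hcon
      have hstrict : (a+k-1)^a * (b+k-1)^b < k * (n-2)^(n-k-1) := by
        have := main_ineq_strict (k-1) a b (by omega) (by omega)
        rw [e1, e2, e3, e4, e5] at this
        exact this
      have hcancel : ((a+k-1)^a * (b+k-1)^b)^2 = (k * (n-2)^(n-k-1))^2 := by
        have h0 : ((a+k-1)^a * (b+k-1)^b)^2 * ((n-1)^2)^k =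
            (k * (n-2)^(n-k-1))^2 * ((n-1)^2)^k := by
          rw [← hsq1, hmid_eq, ← hsq2]
        exact Nat.eq_of_mul_eq_mul_right
          (Nat.pow_pos (Nat.pow_pos (by omega))) h0
      have hbase : (a+k-1)^a * (b+k-1)^b = k * (n-2)^(n-k-1) :=
        Nat.pow_left_injective (by norm_num) hcancel
      omega
    rcases hor with h1a | h1b
    · obtain ⟨u₀, hu₀⟩ := Finset.card_eq_one.1 (ha.symm.trans h1a)
      have hu₀A : u₀ ∈ A' := by rw [hu₀]; exact Finset.mem_singleton_self _
      have hu₀B : u₀ ∉ B' := Finset.disjoint_left.1 hAB'disj hu₀A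
      have hu₀C : u₀ ∉ C :=
        Finset.disjoint_left.1 hdisjC (Finset.mem_union_left _ hu₀A)
      have hBC : Disjoint B' C :=
        Finset.disjoint_of_subset_left Finset.subset_union_right hdisjC
      have hadj := adj_characterization G n k hk hkn hV u₀ B' C hu₀B hu₀C hBC
        (by omega) hCcard
        (fun v hv => hnoedge' u₀ hu₀A v hv)
        (by have := hdA u₀ hu₀A; omega)
        (fun v hv => by have := hdB v hv; omega)
        hdC
      exact iso_of_structure G n k hk hkn hV u₀ B' C hu₀B hu₀C hBC
        (by omega) hCcard hadj
    · obtain ⟨u₀, hu₀⟩ := Finset.card_eq_one.1 (hb.symm.trans h1b)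
      have hu₀B : u₀ ∈ B' := by rw [hu₀]; exact Finset.mem_singleton_self _
      have hu₀A : u₀ ∉ A' := Finset.disjoint_right.1 hAB'disj hu₀B
      have hu₀C : u₀ ∉ C :=
        Finset.disjoint_left.1 hdisjC (Finset.mem_union_right _ hu₀B)
      have hAC : Disjoint A' C :=
        Finset.disjoint_of_subset_left Finset.subset_union_left hdisjC
      have hadj := adj_characterization G n k hk hkn hV u₀ A' C hu₀A hu₀C hAC
        (by omega) hCcard
        (fun v hv h => hnoedge' v hv u₀ hu₀B h.symm)
        (by have := hdB u₀ hu₀B; omega)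
        (fun v hv => by have := hdA v hv; omega)
        hdC
      exact iso_of_structure G n k hk hkn hV u₀ A' C hu₀A hu₀C hAC
        (by omega) hCcard hadj
  · rintro ⟨e⟩
    rw [multZagreb1_eq_of_iso e, multZagreb1_Knk n k hk hkn]
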